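/- For all i, j with 1 ≤ i ≤ m and 1 ≤ j ≤ n such that a_i = b_j: every LCS of A_i and B_j ends with the character a_i; moreover, a list s is an LCS of A_i and B_j if and only if s = s' ++ [a_i] for some LCS s' of A_{i-1} and B_{j-1}. -/

import Mathlib

/-- `s` is a common subsequence of `A` and `B`. -/
def IsCommonSubseq {α : Type*} (A B s : List α) : Prop :=
  s.Sublist A ∧ s.Sublist B

/-- `lcsL A B i j` is the maximum length of a common subsequence of the
length-`i` prefix of `A` and the length-`j` prefix of `B`. -/
noncomputable def lcsL {α : Type*} (A B : List α) (i j : ℕ) : ℕ :=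
  sSup {k | ∃ s : List α, IsCommonSubseq (A.take i) (B.take j) s ∧ s.length = k}

/-- `s` is a longest common subsequence of the length-`i` prefix of `A` and
the length-`j` prefix of `B`. -/
def IsLCS {α : Type*} (A B : List α) (i j : ℕ) (s : List α) : Prop :=
  IsCommonSubseq (A.take i) (B.take j) s ∧ s.length = lcsL A B i j

/-- The (1-indexed) pair `(i, j)` is a match: `a_i = b_j`. -/
def IsMatch {α : Type*} (A B : List α) (i j : ℕ) : Prop :=
  1 ≤ i ∧ i ≤ A.length ∧ 1 ≤ j ∧ j ≤ B.length ∧ A[i - 1]? = B[j - 1]?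

/-- `e` is an embedding of the list `s` in the pair of prefixes `(A_i, B_j)`:
a sequence of (1-indexed) position pairs, strictly increasing in both
coordinates, lying in `[1..i] × [1..j]`, such that the `t`-th pair points at
occurrences of the `t`-th character of `s` in both strings. -/
def IsEmbedding {α : Type*} (A B : List α) (i j : ℕ) (s : List α)
    (e : List (ℕ × ℕ)) : Prop :=
  e.Chain' (fun u v => u.1 < v.1 ∧ u.2 < v.2) ∧
  (∀ u ∈ e, 1 ≤ u.1 ∧ u.1 ≤ i ∧ 1 ≤ u.2 ∧ u.2 ≤ j) ∧
  List.Forall₂ (fun (u : ℕ × ℕ) (c : α) =>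
    A[u.1 - 1]? = some c ∧ B[u.2 - 1]? = some c) e s

/-- The match `(i, j)` is antidominant of rank `r` within the rectangle
`[1..I] × [1..J]`. -/
def IsAntidominant {α : Type*} (A B : List α) (r I J i j : ℕ) : Prop :=
  IsMatch A B i j ∧ i ≤ I ∧ j ≤ J ∧ lcsL A B i j = r ∧
  ¬ ∃ i' j', IsMatch A B i' j' ∧ lcsL A B i' j' = r ∧
    ((i' = i ∧ j < j' ∧ j' ≤ J) ∨ (j' = j ∧ i < i' ∧ i' ≤ I))

/-- `e` is an antidominant backtrace for `(i, j)`: a sequence of matches of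
length `L(i,j)`, strictly increasing in both coordinates, such that (setting
the `(k+1)`-st entry to `(i+1, j+1)`) the `t`-th match is antidominant of rank
`t` within the rectangle determined by the `(t+1)`-st entry minus one. -/
def IsAntidominantBacktrace {α : Type*} (A B : List α) (i j : ℕ)
    (e : List (ℕ × ℕ)) : Prop :=
  e.length = lcsL A B i j ∧
  e.Chain' (fun u v => u.1 < v.1 ∧ u.2 < v.2) ∧
  ∀ t < e.length,
    IsAntidominant A B (t + 1)
      (((e ++ [(i + 1, j + 1)]).getD (t + 1) (0, 0)).1 - 1)
      (((e ++ [(i + 1, j + 1)]).getD (t + 1) (0, 0)).2 - 1)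
      (e.getD t (0, 0)).1 (e.getD t (0, 0)).2


section Aux
variable {α : Type*}

lemma lcs_bdd (A B : List α) (i j : ℕ) :
    BddAbove {k | ∃ s : List α, IsCommonSubseq (A.take i) (B.take j) s ∧ s.length = k} := by
  refine ⟨(A.take i).length, fun k hk => ?_⟩
  obtain ⟨s, ⟨h1, _⟩, rfl⟩ := hk
  exact h1.length_le

lemma length_le_lcsL {A B : List α} {i j : ℕ} {s : List α}
    (h : IsCommonSubseq (A.take i) (B.take j) s) : s.length ≤ lcsL A B i j :=
  le_csSup (lcs_bdd A B i j) ⟨s, h, rfl⟩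

lemma exists_isLCS (A B : List α) (i j : ℕ) : ∃ s, IsLCS A B i j s := by
  have hne : ({k | ∃ s : List α, IsCommonSubseq (A.take i) (B.take j) s ∧ s.length = k}).Nonempty :=
    ⟨0, [], ⟨List.nil_sublist _, List.nil_sublist _⟩, rfl⟩
  obtain ⟨s, hs, hl⟩ := Nat.sSup_mem hne (lcs_bdd A B i j)
  exact ⟨s, hs, hl⟩

lemma sublist_of_sublist_append_singleton {s t : List α} {c : α}
    (h : s.Sublist (t ++ [c])) (hne : s.getLast? ≠ some c) : s.Sublist t := by
  rw [List.sublist_append_iff] at h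
  obtain ⟨s1, s2, rfl, h1, h2⟩ := h
  rcases List.sublist_singleton.1 h2 with rfl | rfl
  · simpa using h1
  · exact absurd (by simp) hne
end Aux

theorem stmt_3 {α : Type*} [DecidableEq α] (A B : List α) (m n : ℕ)
    (hA : A.length = m) (hB : B.length = n) (i j : ℕ)
    (hi1 : 1 ≤ i) (him : i ≤ m) (hj1 : 1 ≤ j) (hjn : j ≤ n)
    (hab : A[i - 1]? = B[j - 1]?) :
    (∀ s : List α, IsLCS A B i j s → s.getLast? = A[i - 1]?) ∧
    (∀ s : List α, IsLCS A B i j s ↔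
      ∃ (s' : List α) (c : α), IsLCS A B (i - 1) (j - 1) s' ∧
        A[i - 1]? = some c ∧ s = s' ++ [c]) := by
  -- extract the common character
  subst hA hB
  obtain ⟨c, hc⟩ : ∃ c, A[i-1]? = some c := by
    rw [List.getElem?_eq_getElem (by omega)]; exact ⟨_, rfl⟩
  have hcB : B[j-1]? = some c := hab ▸ hc
  have hAtake : A.take i = A.take (i-1) ++ [c] := by
    have : i = (i-1) + 1 := by omega
    rw [this, List.take_succ, hc]; rfl
  have hBtake : B.take j = B.take (j-1) ++ [c] := by
    have : j = (j-1) + 1 := by omega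
    rw [this, List.take_succ, hcB]; rfl
  -- Part 1
  have part1 : ∀ s : List α, IsLCS A B i j s → s.getLast? = some c := by
    intro s ⟨⟨hsA, hsB⟩, hlen⟩
    by_contra hne
    have hsA' : s.Sublist (A.take (i-1)) :=
      sublist_of_sublist_append_singleton (hAtake ▸ hsA) hne
    have hsB' : s.Sublist (B.take (j-1)) :=
      sublist_of_sublist_append_singleton (hBtake ▸ hsB) hne
    have hcs : IsCommonSubseq (A.take i) (B.take j) (s ++ [c]) := by
      rw [hAtake, hBtake]
      exact ⟨(List.append_sublist_append_right _).2 hsA',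
             (List.append_sublist_append_right _).2 hsB'⟩
    have := length_le_lcsL hcs
    simp [← hlen] at this
  -- key length equation
  have hdecomp : ∀ s : List α, IsLCS A B i j s →
      ∃ s', s = s' ++ [c] ∧ s'.Sublist (A.take (i-1)) ∧ s'.Sublist (B.take (j-1)) := by
    intro s hs
    have hlast := part1 s hs
    have hne : s ≠ [] := by rintro rfl; simp at hlast
    refine ⟨s.dropLast, ?_, ?_, ?_⟩
    · conv_lhs => rw [← List.dropLast_append_getLast hne]
      rw [List.getLast?_eq_getLast hne] at hlast
      simp [Option.some_inj.1 hlast]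
    all_goals {
      have heq : s = s.dropLast ++ [c] := by
        conv_lhs => rw [← List.dropLast_append_getLast hne]
        rw [List.getLast?_eq_getLast hne] at hlast
        simp [Option.some_inj.1 hlast]
      first
      | exact (List.append_sublist_append_right _).1
          (by rw [← heq, ← hAtake]; exact hs.1.1)
      | exact (List.append_sublist_append_right _).1
          (by rw [← heq, ← hBtake]; exact hs.1.2) }
  have hL : lcsL A B (i-1) (j-1) + 1 = lcsL A B i j := by
    obtain ⟨t, ⟨htA, htB⟩, htlen⟩ := exists_isLCS A B (i-1) (j-1)
    obtain ⟨s, hs⟩ := exists_isLCS A B i j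
    obtain ⟨s', rfl, hs'A, hs'B⟩ := hdecomp s hs
    have h1 : lcsL A B (i-1) (j-1) + 1 ≤ lcsL A B i j := by
      have : IsCommonSubseq (A.take i) (B.take j) (t ++ [c]) := by
        rw [hAtake, hBtake]
        exact ⟨(List.append_sublist_append_right _).2 htA,
               (List.append_sublist_append_right _).2 htB⟩
      have := length_le_lcsL this
      simpa [htlen] using this
    have h2 : lcsL A B i j ≤ lcsL A B (i-1) (j-1) + 1 := by
      have := length_le_lcsL ⟨hs'A, hs'B⟩
      have hlen := hs.2
      simp at hlen
      omega
    omega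
  refine ⟨fun s hs => hc ▸ part1 s hs, fun s => ⟨fun hs => ?_, ?_⟩⟩
  · obtain ⟨s', rfl, hs'A, hs'B⟩ := hdecomp s hs
    refine ⟨s', c, ⟨⟨hs'A, hs'B⟩, ?_⟩, hc, rfl⟩
    have hlen := hs.2
    simp at hlen
    omega
  · rintro ⟨s', c', ⟨⟨hs'A, hs'B⟩, hlen⟩, hc', rfl⟩
    obtain rfl : c' = c := by rw [hc] at hc'; exact (Option.some_inj.1 hc').symm
    constructor
    · rw [hAtake, hBtake]
      exact ⟨(List.append_sublist_append_right _).2 hs'A,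
             (List.append_sublist_append_right _).2 hs'B⟩
    · simp [hlen]; omega
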